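/- The modular group PSL(2,ℤ) is isomorphic to the free product C₂ * C₃ of cyclic groups of orders 2 and 3. -/

import Mathlib

open Matrix ModularGroup Matrix.SpecialLinearGroup Pointwise

abbrev SL2Z := Matrix.SpecialLinearGroup (Fin 2) ℤ

lemma neg_one_mem_center : (-1 : SL2Z) ∈ Subgroup.center SL2Z := by
  rw [Matrix.SpecialLinearGroup.mem_center_iff]
  refine ⟨-1, by norm_num, ?_⟩
  simp [scalar_apply]

section hom
variable {G : Type*} [Group G]

lemma pow_mod_eq (g : G) {n : ℕ} (h : g ^ n = 1) (k : ℕ) : g ^ (k % n) = g ^ k := by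
  conv_rhs => rw [← Nat.div_add_mod k n]
  rw [pow_add, pow_mul, h, one_pow, one_mul]

def homOfOrderDvd (n : ℕ) [NeZero n] (g : G) (h : g ^ n = 1) :
    Multiplicative (ZMod n) →* G where
  toFun x := g ^ (Multiplicative.toAdd x).val
  map_one' := by simp
  map_mul' x y := by
    show g ^ (Multiplicative.toAdd x + Multiplicative.toAdd y).val = _
    rw [ZMod.val_add, pow_mod_eq g h, pow_add]

end hom

section coprodI
variable {M N : Type} [Group M] [Group N]

abbrev Fam (M N : Type) : Bool → Type := fun b => Bool.rec N M b

instance famGroup : ∀ b, Group (Fam M N b) := fun b => by cases b <;> (dsimp [Fam]; infer_instance)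

def toI : Monoid.Coprod M N →* Monoid.CoprodI (Fam M N) :=
  Monoid.Coprod.lift (Monoid.CoprodI.of (M := Fam M N) (i := true)) (Monoid.CoprodI.of (M := Fam M N) (i := false))

def fromI : Monoid.CoprodI (Fam M N) →* Monoid.Coprod M N :=
  Monoid.CoprodI.lift (fun b => Bool.rec (Monoid.Coprod.inr) (Monoid.Coprod.inl) b)

lemma fromI_toI (x : Monoid.Coprod M N) : fromI (toI x) = x := by
  have : (fromI).comp (toI : Monoid.Coprod M N →* _) = MonoidHom.id _ := by
    apply Monoid.Coprod.hom_ext <;>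
      ext x <;> simp [toI, fromI, Monoid.CoprodI.lift_of]
  exact DFunLike.congr_fun this x

lemma toI_injective : Function.Injective (toI : Monoid.Coprod M N →* _) :=
  Function.LeftInverse.injective fromI_toI

end coprodI

-- PSL part
def V : SL2Z := ModularGroup.T * ModularGroup.S

lemma coe_V : (V : Matrix (Fin 2) (Fin 2) ℤ) = !![1,-1;1,0] := by
  simp [V, coe_mul, coe_T, coe_S, Matrix.mul_fin_two]

lemma S_sq : (ModularGroup.S : SL2Z) ^ 2 = -1 := by
  ext i j
  rw [pow_two]
  simp [coe_mul, S_mul_S_eq, coe_neg, coe_one]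
  fin_cases i <;> fin_cases j <;> simp [Matrix.one_fin_two]

lemma V_cube : V ^ 3 = -1 := by
  ext i j
  rw [pow_succ, pow_two]
  simp only [coe_mul, coe_V, coe_neg, coe_one, Matrix.mul_fin_two]
  norm_num
  fin_cases i <;> fin_cases j <;> simp [Matrix.one_fin_two]

abbrev PSL := SL2Z ⧸ Subgroup.center SL2Z

def pr : SL2Z →* PSL := QuotientGroup.mk' _

lemma pr_neg_one : pr (-1) = 1 := by
  rw [pr, QuotientGroup.mk'_apply, QuotientGroup.eq_one_iff]
  exact neg_one_mem_center

noncomputable def σ : PSL := pr ModularGroup.S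
noncomputable def ν : PSL := pr V

lemma σ_sq : σ ^ 2 = 1 := by rw [σ, ← map_pow, S_sq, pr_neg_one]
lemma ν_cube : ν ^ 3 = 1 := by rw [ν, ← map_pow, V_cube, pr_neg_one]

noncomputable def f2 : Multiplicative (ZMod 2) →* PSL := homOfOrderDvd 2 σ σ_sq
noncomputable def f3 : Multiplicative (ZMod 3) →* PSL := homOfOrderDvd 3 ν ν_cube

noncomputable def ψ : Monoid.Coprod (Multiplicative (ZMod 2)) (Multiplicative (ZMod 3)) →* PSL :=
  Monoid.Coprod.lift f2 f3

noncomputable def F : ∀ b, Fam (Multiplicative (ZMod 2)) (Multiplicative (ZMod 3)) b →* PSL :=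
  fun b => Bool.rec f3 f2 b

lemma ψ_eq : ψ = (Monoid.CoprodI.lift F).comp toI := by
  apply Monoid.Coprod.hom_ext <;> ext x <;>
    simp [ψ, toI, F, Monoid.CoprodI.lift_of]

-- range facts
lemma σ_mem : σ ∈ ψ.range :=
  ⟨Monoid.Coprod.inl (Multiplicative.ofAdd 1), by
    simp [ψ, Monoid.Coprod.lift_apply_inl, f2, homOfOrderDvd, ZMod.val_one]⟩

lemma ν_mem : ν ∈ ψ.range :=
  ⟨Monoid.Coprod.inr (Multiplicative.ofAdd 1), by
    simp [ψ, Monoid.Coprod.lift_apply_inr, f3, homOfOrderDvd, ZMod.val_one]⟩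

lemma τ_mem : pr ModularGroup.T ∈ ψ.range := by
  have hV : V * ModularGroup.S = ModularGroup.T * ModularGroup.S ^ 2 := by
    rw [V, mul_assoc, pow_two]
  have h : ν * σ = pr ModularGroup.T := by
    rw [ν, σ, ← _root_.map_mul, hV, _root_.map_mul, S_sq, pr_neg_one, mul_one]
  rw [← h]
  exact mul_mem ν_mem σ_mem

lemma pr_mem_range (A : SL2Z) : pr A ∈ ψ.range := by
  generalize hn : ((A : Matrix (Fin 2) (Fin 2) ℤ) 1 0).natAbs = n
  induction n using Nat.strong_induction_on generalizing A with
  | _ n IH =>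
  by_cases hc : (A : Matrix (Fin 2) (Fin 2) ℤ) 1 0 = 0
  · -- c = 0
    have hdet : (A : Matrix (Fin 2) (Fin 2) ℤ) 0 0 * (A : Matrix (Fin 2) (Fin 2) ℤ) 1 1 = 1 := by
      have h := A.property
      rw [Matrix.det_fin_two, hc, mul_zero, sub_zero] at h
      exact h
    rcases Int.mul_eq_one_iff_eq_one_or_neg_one.mp hdet with ⟨ha, hd⟩ | ⟨ha, hd⟩
    · have hA : A = ModularGroup.T ^ ((A : Matrix (Fin 2) (Fin 2) ℤ) 0 1) := by
        apply Subtype.ext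
        rw [ModularGroup.coe_T_zpow]
        conv_lhs => rw [Matrix.eta_fin_two (A : Matrix (Fin 2) (Fin 2) ℤ)]
        rw [ha, hc, hd]
      rw [hA, map_zpow]
      exact zpow_mem τ_mem _
    · have hA : A = (-1) * ModularGroup.T ^ (-((A : Matrix (Fin 2) (Fin 2) ℤ) 0 1)) := by
        apply Subtype.ext
        rw [Matrix.SpecialLinearGroup.coe_mul, ModularGroup.coe_T_zpow,
          Matrix.SpecialLinearGroup.coe_neg, Matrix.SpecialLinearGroup.coe_one, neg_one_mul]
        conv_lhs => rw [Matrix.eta_fin_two (A : Matrix (Fin 2) (Fin 2) ℤ)]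
        rw [ha, hc, hd]
        simp
      rw [hA, _root_.map_mul, pr_neg_one, one_mul, map_zpow]
      exact zpow_mem τ_mem _
  · -- c ≠ 0 : Euclidean step
    set q : ℤ := (A : Matrix (Fin 2) (Fin 2) ℤ) 0 0 / (A : Matrix (Fin 2) (Fin 2) ℤ) 1 0 with hq
    set B : SL2Z := ModularGroup.S * (ModularGroup.T ^ (-q) * A) with hB
    have hBc : (B : Matrix (Fin 2) (Fin 2) ℤ) 1 0
        = (A : Matrix (Fin 2) (Fin 2) ℤ) 0 0 % (A : Matrix (Fin 2) (Fin 2) ℤ) 1 0 := by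
      rw [hB, Matrix.SpecialLinearGroup.coe_mul, Matrix.SpecialLinearGroup.coe_mul,
        ModularGroup.coe_S, ModularGroup.coe_T_zpow, Int.emod_def]
      simp [Matrix.mul_apply, Fin.sum_univ_two, Matrix.vecMul, dotProduct, Matrix.vecHead, Matrix.vecTail, hq]
      ring
    have hlt : ((B : Matrix (Fin 2) (Fin 2) ℤ) 1 0).natAbs < n := by
      rw [hBc, ← hn]
      have h1 : 0 ≤ (A : Matrix (Fin 2) (Fin 2) ℤ) 0 0 % (A : Matrix (Fin 2) (Fin 2) ℤ) 1 0 :=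
        Int.emod_nonneg _ hc
      have h2 : (A : Matrix (Fin 2) (Fin 2) ℤ) 0 0 % (A : Matrix (Fin 2) (Fin 2) ℤ) 1 0
          < |(A : Matrix (Fin 2) (Fin 2) ℤ) 1 0| := by
            have := Int.emod_lt ((A : Matrix (Fin 2) (Fin 2) ℤ) 0 0) hc; rw [Int.abs_eq_natAbs]; exact this
      rw [Int.abs_eq_natAbs] at h2
      omega
    have hBmem := IH _ hlt B rfl
    have hA : A = ModularGroup.T ^ q * (ModularGroup.S⁻¹ * B) := by
      rw [hB]; group
    rw [hA, _root_.map_mul, _root_.map_mul, map_zpow, map_inv]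
    exact mul_mem (zpow_mem τ_mem _) (mul_mem (inv_mem σ_mem) hBmem)

-- center acts trivially on UpperHalfPlane
open UpperHalfPlane in
lemma center_act_trivial (A : SL2Z) (hA : A ∈ Subgroup.center SL2Z) (z : UpperHalfPlane) : A • z = z := by
  obtain ⟨r, hr, hrA⟩ := Matrix.SpecialLinearGroup.mem_center_iff.mp hA
  simp only [Fintype.card_fin] at hr
  have hr' : r * r = 1 := by rw [← pow_two]; exact hr
  rcases Int.mul_eq_one_iff_eq_one_or_neg_one.mp hr' with ⟨h1, _⟩ | ⟨h1, _⟩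
  · subst h1
    have : A = 1 := by
      apply Subtype.ext
      rw [← hrA]
      simp
    rw [this, one_smul]
  · subst h1
    have : A = -1 := by
      apply Subtype.ext
      rw [← hrA, Matrix.SpecialLinearGroup.coe_neg, Matrix.SpecialLinearGroup.coe_one]
      simp
    rw [this]
    exact (ModularGroup.SL_neg_smul 1 z).trans (one_smul _ z)

noncomputable def pslHom : PSL →* Equiv.Perm UpperHalfPlane :=
  QuotientGroup.lift _ (MulAction.toPermHom SL2Z UpperHalfPlane)
    (fun A hA => Equiv.Perm.ext fun z => center_act_trivial A hA z)

lemma pslHom_pr (A : SL2Z) (z : UpperHalfPlane) : pslHom (pr A) z = A • z := rfl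

-- real part computations
lemma re_S_smul (z : UpperHalfPlane) :
    (ModularGroup.S • z).re = -z.re / Complex.normSq (z : ℂ) := by
  rw [UpperHalfPlane.modular_S_smul, UpperHalfPlane.mk_re, Complex.inv_re,
    Complex.normSq_neg, Complex.neg_re, UpperHalfPlane.coe_re]

lemma S_smul_neg_of_pos {z : UpperHalfPlane} (hz : 0 < z.re) : (ModularGroup.S • z).re < 0 := by
  rw [re_S_smul]
  exact div_neg_of_neg_of_pos (neg_neg_iff_pos.mpr hz) z.normSq_pos

lemma S_smul_pos_of_neg {z : UpperHalfPlane} (hz : z.re < 0) : 0 < (ModularGroup.S • z).re := by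
  rw [re_S_smul]
  exact div_pos (by linarith) z.normSq_pos

lemma V_smul_pos_of_neg {z : UpperHalfPlane} (hz : z.re < 0) : 0 < (V • z).re := by
  rw [V, mul_smul, UpperHalfPlane.modular_T_smul, UpperHalfPlane.vadd_re]
  have := S_smul_pos_of_neg hz
  linarith

lemma V_sq : V ^ 2 = ModularGroup.S * ModularGroup.T⁻¹ := by
  ext i j
  rw [pow_two]
  simp only [Matrix.SpecialLinearGroup.coe_mul, coe_V, ModularGroup.coe_S, ModularGroup.coe_T_inv,
    Matrix.mul_fin_two]
  norm_num

lemma V_sq_smul_pos_of_neg {z : UpperHalfPlane} (hz : z.re < 0) : 0 < ((V ^ 2) • z).re := by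
  rw [V_sq, mul_smul]
  have hT : (ModularGroup.T⁻¹ • z).re < 0 := by
    rw [← _root_.zpow_neg_one, UpperHalfPlane.modular_T_zpow_smul, UpperHalfPlane.vadd_re]
    push_cast
    linarith
  exact S_smul_pos_of_neg hT

lemma f2_eq (h : Multiplicative (ZMod 2)) (hh : h ≠ 1) : f2 h = σ := by
  have h1 : Multiplicative.toAdd h = 1 := by revert h; decide
  show σ ^ (Multiplicative.toAdd h).val = σ
  rw [h1, ZMod.val_one, pow_one]

lemma f3_eq (h : Multiplicative (ZMod 3)) (hh : h ≠ 1) : f3 h = ν ∨ f3 h = ν ^ 2 := by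
  have h1 : Multiplicative.toAdd h = 1 ∨ Multiplicative.toAdd h = 2 := by revert h; decide
  rcases h1 with h1 | h1
  · left
    show ν ^ (Multiplicative.toAdd h).val = ν
    rw [h1, ZMod.val_one, pow_one]
  · right
    show ν ^ (Multiplicative.toAdd h).val = ν ^ 2
    rw [h1, show ((2 : ZMod 3)).val = 2 from rfl]

lemma ψ_inj : Function.Injective ψ := by
  rw [ψ_eq, MonoidHom.coe_comp]
  refine Function.Injective.comp ?_ toI_injective
  letI : MulAction PSL UpperHalfPlane := MulAction.compHom _ pslHom
  have smul_pr : ∀ (A : SL2Z) (z : UpperHalfPlane), (pr A) • z = A • z := fun A z => rfl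
  set X : Bool → Set UpperHalfPlane :=
    fun b => Bool.rec {z | 0 < z.re} {z | z.re < 0} b with hX
  apply Monoid.CoprodI.lift_injective_of_ping_pong F ?_ X ?_ ?_ ?_
  · -- card
    right
    refine ⟨false, ?_⟩
    rw [Cardinal.mk_fintype]
    norm_num
  · -- nonempty
    intro b
    cases b
    · exact ⟨UpperHalfPlane.mk (1 + Complex.I) (by simp), by simp [hX, UpperHalfPlane.mk_re]⟩
    · exact ⟨UpperHalfPlane.mk (-1 + Complex.I) (by simp), by simp [hX, UpperHalfPlane.mk_re]⟩
  · -- disjoint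
    intro i j hij
    cases i <;> cases j <;> try exact absurd rfl hij
    all_goals
      simp only [Function.onFun]
      rw [Set.disjoint_left]
      intro z hz1 hz2
      simp only [hX, Set.mem_setOf_eq] at hz1 hz2
      linarith
  · -- ping pong
    intro i j hij
    cases i <;> cases j <;> try exact absurd rfl hij
    · -- i = false (ZMod 3, ν), j = true
      intro h hh
      rcases f3_eq h hh with he | he
      · show (f3 h) • X true ⊆ X false
        rw [he]
        rintro w ⟨z, hz, rfl⟩
        have hz' : z.re < 0 := hz
        show 0 < ((ν : PSL) • z).re
        rw [ν, smul_pr]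
        exact V_smul_pos_of_neg hz'
      · show (f3 h) • X true ⊆ X false
        rw [he]
        rintro w ⟨z, hz, rfl⟩
        have hz' : z.re < 0 := hz
        show 0 < ((ν ^ 2 : PSL) • z).re
        rw [ν, ← map_pow, smul_pr]
        exact V_sq_smul_pos_of_neg hz'
    · -- i = true (ZMod 2, σ), j = false
      intro h hh
      show (f2 h) • X false ⊆ X true
      rw [f2_eq h hh]
      rintro w ⟨z, hz, rfl⟩
      have hz' : 0 < z.re := hz
      show ((σ : PSL) • z).re < 0
      rw [σ, smul_pr]
      exact S_smul_neg_of_pos hz'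

lemma ψ_surj : Function.Surjective ψ := by
  intro g
  obtain ⟨A, rfl⟩ := QuotientGroup.mk'_surjective (Subgroup.center SL2Z) g
  exact pr_mem_range A

theorem psl2z_iso_free_product_C2_C3 :
    Nonempty ((Matrix.SpecialLinearGroup (Fin 2) ℤ ⧸
        Subgroup.center (Matrix.SpecialLinearGroup (Fin 2) ℤ)) ≃*
      Monoid.Coprod (Multiplicative (ZMod 2)) (Multiplicative (ZMod 3))) := by
  exact ⟨(MulEquiv.ofBijective ψ ⟨ψ_inj, ψ_surj⟩).symm⟩
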